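/- If α : [0,T] → (1,2) is continuously differentiable with α(0) = α₀, then the generalized identity function g(t) = ∫_0^t (t-s)^{α₀-2}/Γ(α₀-1) · s^{1-α(s)}/Γ(2-α(s)) ds satisfies g(0⁺) = 1, i.e., g extends continuously to t = 0 with value 1. -/

import Mathlib

open MeasureTheory intervalIntegral Set Filter

/-- real Beta integral, scaled. -/
lemma real_beta_integral {a b t : ℝ} (ha : 0 < a) (hb : 0 < b) (ht : 0 < t) :
    ∫ s in (0:ℝ)..t, s ^ (a - 1) * (t - s) ^ (b - 1) =
      t ^ (a + b - 1) * (Real.Gamma a * Real.Gamma b / Real.Gamma (a + b)) := by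
  have hΓab : Real.Gamma (a + b) ≠ 0 := (Real.Gamma_pos_of_pos (by linarith)).ne'
  have key := Complex.betaIntegral_scaled (a : ℂ) (b : ℂ) ht
  have hbeta : Complex.betaIntegral a b =
      ((Real.Gamma a * Real.Gamma b / Real.Gamma (a + b) : ℝ) : ℂ) := by
    have h := Complex.Gamma_mul_Gamma_eq_betaIntegral (s := (a : ℂ)) (t := (b : ℂ))
      (by simpa using ha) (by simpa using hb)
    have h2 : Complex.Gamma ((a : ℂ) + (b : ℂ)) ≠ 0 := by
      rw [← Complex.ofReal_add, Complex.Gamma_ofReal]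
      exact_mod_cast hΓab
    have h3 : Complex.betaIntegral a b =
        Complex.Gamma a * Complex.Gamma b / Complex.Gamma ((a : ℂ) + b) := by
      rw [eq_div_iff h2, mul_comm]
      exact h.symm
    rw [h3, ← Complex.ofReal_add, Complex.Gamma_ofReal, Complex.Gamma_ofReal,
      Complex.Gamma_ofReal]
    push_cast
    ring
  have hint : (∫ x in (0:ℝ)..t, (x : ℂ) ^ ((a : ℂ) - 1) * ((t : ℂ) - x) ^ ((b : ℂ) - 1))
      = ((∫ s in (0:ℝ)..t, s ^ (a - 1) * (t - s) ^ (b - 1) : ℝ) : ℂ) := by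
    rw [← intervalIntegral.integral_ofReal]
    apply intervalIntegral.integral_congr
    intro x hx
    rw [Set.uIcc_of_le ht.le] at hx
    simp only []
    rw [Complex.ofReal_mul, Complex.ofReal_cpow hx.1,
      Complex.ofReal_cpow (by linarith [hx.2] : (0:ℝ) ≤ t - x)]
    push_cast
    ring
  rw [hint, hbeta] at key
  have hrhs : ((t : ℂ)) ^ ((a : ℂ) + (b : ℂ) - 1) = ((t ^ (a + b - 1) : ℝ) : ℂ) := by
    rw [Complex.ofReal_cpow ht.le]
    push_cast
    ring_nf
  rw [hrhs, ← Complex.ofReal_mul] at key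
  exact_mod_cast key

lemma real_beta_integral' {a b t : ℝ} (ha : 0 < a) (hb : 0 < b) (ht : 0 < t) :
    ∫ s in (0:ℝ)..t, (t - s) ^ (a - 1) * s ^ (b - 1) =
      t ^ (a + b - 1) * (Real.Gamma a * Real.Gamma b / Real.Gamma (a + b)) := by
  have := real_beta_integral hb ha ht
  rw [intervalIntegral.integral_congr (g := fun s => s ^ (b - 1) * (t - s) ^ (a - 1))
    (fun x _ => by ring), this, add_comm b a, mul_comm (Real.Gamma b)]

lemma beta_intervalIntegrable {a b t : ℝ} (ha : 0 < a) (hb : 0 < b) (ht : 0 < t) :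
    IntervalIntegrable (fun s => (t - s) ^ (a - 1) * s ^ (b - 1)) volume 0 t := by
  have h1 : IntervalIntegrable (fun s => (t - s) ^ (a - 1) * s ^ (b - 1)) volume 0 (t / 2) := by
    refine (intervalIntegrable_rpow' (by linarith)).continuousOn_mul ?_
    apply ContinuousOn.rpow_const
    · exact continuousOn_const.sub continuousOn_id
    · intro x hx
      rw [Set.uIcc_of_le (by linarith)] at hx
      exact Or.inl (by cases hx; intro h; nlinarith [sub_eq_zero.mp h])
  have h2 : IntervalIntegrable (fun s => (t - s) ^ (a - 1) * s ^ (b - 1)) volume (t / 2) t := by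
    have base : IntervalIntegrable (fun s : ℝ => s ^ (a - 1)) volume (t / 2) 0 :=
      intervalIntegrable_rpow' (by linarith)
    have comp := base.comp_sub_left t
    have hsimp : t - t / 2 = t / 2 := by ring
    rw [hsimp, sub_zero] at comp
    refine comp.mul_continuousOn ?_
    apply ContinuousOn.rpow_const
    · exact continuousOn_id
    · intro x hx
      rw [Set.uIcc_of_le (by linarith)] at hx
      exact Or.inl (by cases hx; intro h; nlinarith)
  exact h1.trans h2

lemma gamma_continuousAt {x : ℝ} (hx : 0 < x) : ContinuousAt Real.Gamma x :=
  (Real.differentiableAt_Gamma fun m =>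
    ((neg_nonpos.mpr (Nat.cast_nonneg m)).trans_lt hx).ne').continuousAt

/-- the scaled beta integral divided by a constant. -/
lemma beta_div_eval {a b t c : ℝ} (ha : 0 < a) (hb : 0 < b) (ht : 0 < t) (hc : c ≠ 0) :
    ∫ s in (0:ℝ)..t, (t - s) ^ (a - 1) * s ^ (b - 1) / (Real.Gamma a * c) =
      t ^ (a + b - 1) * Real.Gamma b / (Real.Gamma (a + b) * c) := by
  rw [intervalIntegral.integral_div, real_beta_integral' ha hb ht]
  have h1 : Real.Gamma a ≠ 0 := (Real.Gamma_pos_of_pos ha).ne'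
  have h2 : Real.Gamma (a + b) ≠ 0 := (Real.Gamma_pos_of_pos (by linarith)).ne'
  field_simp

lemma rpow_self_tendsto : Filter.Tendsto (fun t : ℝ => t * Real.log t)
    (nhdsWithin 0 (Set.Ioi 0)) (nhds 0) := by
  have := Real.continuous_mul_log.tendsto 0
  simpa using this.mono_left nhdsWithin_le_nhds

lemma tendsto_rpow_mul_self (L : ℝ) :
    Filter.Tendsto (fun t : ℝ => t ^ (L * t)) (nhdsWithin 0 (Set.Ioi 0)) (nhds 1) := by
  have h2 : Filter.Tendsto (fun t : ℝ => Real.exp (L * (t * Real.log t)))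
      (nhdsWithin 0 (Set.Ioi 0)) (nhds 1) := by
    have hmul := rpow_self_tendsto.const_mul L
    rw [mul_zero] at hmul
    have h3 := (Real.continuous_exp.tendsto 0).comp hmul
    rw [Real.exp_zero] at h3
    exact h3
  refine h2.congr' (eventually_nhdsWithin_of_forall fun t ht => ?_)
  show Real.exp (L * (t * Real.log t)) = t ^ (L * t)
  rw [Real.rpow_def_of_pos ht]
  ring_nf

lemma PQ_tendsto (L β₀ : ℝ) (hβ : 0 < β₀) :
    Filter.Tendsto (fun t : ℝ => t ^ (L * t) * Real.Gamma (β₀ + L * t) / Real.Gamma (1 + L * t))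
      (nhdsWithin 0 (Set.Ioi 0)) (nhds (Real.Gamma β₀)) := by
  have h1 := tendsto_rpow_mul_self L
  have hlin : ∀ c : ℝ, Filter.Tendsto (fun t : ℝ => c + L * t)
      (nhdsWithin 0 (Set.Ioi 0)) (nhds c) := by
    intro c
    have : Filter.Tendsto (fun t : ℝ => c + L * t) (nhds 0) (nhds (c + L * 0)) :=
      (continuous_const.add (continuous_const.mul continuous_id)).tendsto 0
    rw [mul_zero, add_zero] at this
    exact this.mono_left nhdsWithin_le_nhds
  have h2 : Filter.Tendsto (fun t : ℝ => Real.Gamma (β₀ + L * t))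
      (nhdsWithin 0 (Set.Ioi 0)) (nhds (Real.Gamma β₀)) :=
    ((gamma_continuousAt hβ).tendsto).comp (hlin β₀)
  have h3 : Filter.Tendsto (fun t : ℝ => Real.Gamma (1 + L * t))
      (nhdsWithin 0 (Set.Ioi 0)) (nhds 1) := by
    have := ((gamma_continuousAt one_pos).tendsto).comp (hlin 1)
    rwa [Real.Gamma_one] at this
  have := (h1.mul h2).div h3 one_ne_zero
  rw [one_mul, div_one] at this
  exact this

section bounds

variable {α : ℝ → ℝ} {α₀ L cl cu t : ℝ}

/-- continuity of the integrand on the open interval. -/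
lemma f_continuousOn (ht : 0 < t)
    (hcont : ContinuousOn α (Set.Icc 0 t))
    (hrange : ∀ s ∈ Set.Icc 0 t, α s ∈ Set.Ioo (1:ℝ) 2) :
    ContinuousOn (fun u => (t - u) ^ (α₀ - 2) / Real.Gamma (α₀ - 1)
      * (u ^ (1 - α u) / Real.Gamma (2 - α u))) (Set.Ioo 0 t) := by
  have hsub : Set.Ioo (0:ℝ) t ⊆ Set.Icc 0 t := Set.Ioo_subset_Icc_self
  have c1 : ContinuousOn (fun u : ℝ => (t - u) ^ (α₀ - 2)) (Set.Ioo 0 t) :=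
    (continuousOn_const.sub continuousOn_id).rpow_const
      (fun x hx => Or.inl (sub_ne_zero.mpr (ne_of_gt hx.2)))
  have c2 : ContinuousOn (fun u : ℝ => u ^ (1 - α u)) (Set.Ioo 0 t) :=
    ContinuousOn.rpow continuousOn_id
      (continuousOn_const.sub (hcont.mono hsub)) (fun x hx => Or.inl (ne_of_gt hx.1))
  have c3 : ContinuousOn (fun u : ℝ => Real.Gamma (2 - α u)) (Set.Ioo 0 t) := by
    have hΓ : ContinuousOn Real.Gamma (Set.Ioi 0) :=
      fun x hx => (gamma_continuousAt hx).continuousWithinAt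
    exact hΓ.comp (continuousOn_const.sub (hcont.mono hsub))
      (fun x hx => (sub_pos.mpr (hrange x (hsub hx)).2 : (0:ℝ) < 2 - α x))
  exact (c1.div_const _).mul (c2.div c3
    (fun x hx => (Real.Gamma_pos_of_pos (sub_pos.mpr (hrange x (hsub hx)).2)).ne'))

lemma f_nonneg (ht : 0 < t) (hα₀ : 1 < α₀)
    (hrange : ∀ s ∈ Set.Icc 0 t, α s ∈ Set.Ioo (1:ℝ) 2) :
    ∀ u ∈ Set.Ioc 0 t, (0:ℝ) ≤ (t - u) ^ (α₀ - 2) / Real.Gamma (α₀ - 1)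
      * (u ^ (1 - α u) / Real.Gamma (2 - α u)) := by
  intro u hu
  have h1 : (0:ℝ) ≤ (t - u) ^ (α₀ - 2) := Real.rpow_nonneg (by linarith [hu.2]) _
  have h2 : (0:ℝ) ≤ Real.Gamma (α₀ - 1) := (Real.Gamma_pos_of_pos (by linarith)).le
  have h3 : (0:ℝ) ≤ u ^ (1 - α u) := Real.rpow_nonneg hu.1.le _
  have h4 : (0:ℝ) ≤ Real.Gamma (2 - α u) :=
    (Real.Gamma_pos_of_pos (sub_pos.mpr (hrange u ⟨hu.1.le, hu.2⟩).2)).le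
  positivity

end bounds

section bounds2

variable {α : ℝ → ℝ} {α₀ L cl cu t : ℝ}

/-- pointwise upper bound for the integrand. -/
lemma f_pointwise_le (ht : 0 < t) (ht1 : t ≤ 1) (hα₀ : 1 < α₀) (hα₀2 : α₀ < 2)
    (hL : 0 ≤ L) (hclpos : 0 < cl)
    (hrange : ∀ s ∈ Set.Icc 0 t, α s ∈ Set.Ioo (1:ℝ) 2)
    (hlip : ∀ s ∈ Set.Icc 0 t, α s ≤ α₀ + L * t)
    (hΓ : ∀ s ∈ Set.Icc 0 t, cl ≤ Real.Gamma (2 - α s)) :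
    ∀ u ∈ Set.Icc 0 t, (t - u) ^ (α₀ - 2) / Real.Gamma (α₀ - 1)
        * (u ^ (1 - α u) / Real.Gamma (2 - α u))
      ≤ (t - u) ^ (α₀ - 1 - 1) * u ^ (2 - α₀ - L * t - 1) / (Real.Gamma (α₀ - 1) * cl) := by
  intro u hu
  have hus := hrange u hu
  have hΓu : 0 < Real.Gamma (2 - α u) := Real.Gamma_pos_of_pos (by linarith [hus.2])
  have hpow : u ^ (1 - α u) ≤ u ^ (2 - α₀ - L * t - 1) := by
    rcases eq_or_lt_of_le hu.1 with h | h
    · rw [← h, Real.zero_rpow (ne_of_lt (by linarith [(hrange 0 ⟨le_rfl, ht.le⟩).1] :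
          (1:ℝ) - α 0 < 0)),
        Real.zero_rpow (ne_of_lt (by nlinarith : (2:ℝ) - α₀ - L * t - 1 < 0))]
    · exact Real.rpow_le_rpow_of_exponent_ge h (hu.2.trans ht1)
        (by linarith [hlip u hu])
  have hdiv : u ^ (1 - α u) / Real.Gamma (2 - α u) ≤ u ^ (2 - α₀ - L * t - 1) / cl :=
    div_le_div₀ (Real.rpow_nonneg hu.1 _) hpow hclpos (hΓ u hu)
  have hleft : (0:ℝ) ≤ (t - u) ^ (α₀ - 2) / Real.Gamma (α₀ - 1) :=
    div_nonneg (Real.rpow_nonneg (by linarith [hu.2]) _)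
      (Real.Gamma_pos_of_pos (by linarith)).le
  calc (t - u) ^ (α₀ - 2) / Real.Gamma (α₀ - 1) * (u ^ (1 - α u) / Real.Gamma (2 - α u))
      ≤ (t - u) ^ (α₀ - 2) / Real.Gamma (α₀ - 1) * (u ^ (2 - α₀ - L * t - 1) / cl) :=
        mul_le_mul_of_nonneg_left hdiv hleft
    _ = (t - u) ^ (α₀ - 1 - 1) * u ^ (2 - α₀ - L * t - 1) / (Real.Gamma (α₀ - 1) * cl) := by
        rw [show α₀ - 1 - 1 = α₀ - 2 by ring, div_mul_div_comm]

/-- pointwise lower bound for the integrand. -/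
lemma f_pointwise_ge (ht : 0 < t) (ht1 : t ≤ 1) (hα₀ : 1 < α₀) (hα₀2 : α₀ < 2)
    (hL : 0 ≤ L) (hLt : L * t < α₀ - 1) (hcupos : 0 < cu)
    (hrange : ∀ s ∈ Set.Icc 0 t, α s ∈ Set.Ioo (1:ℝ) 2)
    (hlip : ∀ s ∈ Set.Icc 0 t, α₀ - L * t ≤ α s)
    (hΓ : ∀ s ∈ Set.Icc 0 t, Real.Gamma (2 - α s) ≤ cu) :
    ∀ u ∈ Set.Icc 0 t, (t - u) ^ (α₀ - 1 - 1) * u ^ (2 - α₀ + L * t - 1)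
        / (Real.Gamma (α₀ - 1) * cu)
      ≤ (t - u) ^ (α₀ - 2) / Real.Gamma (α₀ - 1)
        * (u ^ (1 - α u) / Real.Gamma (2 - α u)) := by
  intro u hu
  have hus := hrange u hu
  have hΓu : 0 < Real.Gamma (2 - α u) := Real.Gamma_pos_of_pos (by linarith [hus.2])
  have hpow : u ^ (2 - α₀ + L * t - 1) ≤ u ^ (1 - α u) := by
    rcases eq_or_lt_of_le hu.1 with h | h
    · rw [← h, Real.zero_rpow (ne_of_lt (by linarith [(hrange 0 ⟨le_rfl, ht.le⟩).1] :
          (1:ℝ) - α 0 < 0)),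
        Real.zero_rpow (ne_of_lt (by linarith : (2:ℝ) - α₀ + L * t - 1 < 0))]
    · exact Real.rpow_le_rpow_of_exponent_ge h (hu.2.trans ht1)
        (by linarith [hlip u hu])
  have hdiv : u ^ (2 - α₀ + L * t - 1) / cu ≤ u ^ (1 - α u) / Real.Gamma (2 - α u) :=
    div_le_div₀ (Real.rpow_nonneg hu.1 _) hpow hΓu (hΓ u hu)
  have hleft : (0:ℝ) ≤ (t - u) ^ (α₀ - 2) / Real.Gamma (α₀ - 1) :=
    div_nonneg (Real.rpow_nonneg (by linarith [hu.2]) _)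
      (Real.Gamma_pos_of_pos (by linarith)).le
  calc (t - u) ^ (α₀ - 1 - 1) * u ^ (2 - α₀ + L * t - 1) / (Real.Gamma (α₀ - 1) * cu)
      = (t - u) ^ (α₀ - 2) / Real.Gamma (α₀ - 1) * (u ^ (2 - α₀ + L * t - 1) / cu) := by
        rw [show α₀ - 1 - 1 = α₀ - 2 by ring, div_mul_div_comm]
    _ ≤ (t - u) ^ (α₀ - 2) / Real.Gamma (α₀ - 1) * (u ^ (1 - α u) / Real.Gamma (2 - α u)) :=
        mul_le_mul_of_nonneg_left hdiv hleft

end bounds2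

section bounds3

variable {α : ℝ → ℝ} {α₀ L cl cu t : ℝ}

lemma f_intervalIntegrable (ht : 0 < t) (ht1 : t ≤ 1) (hα₀ : 1 < α₀) (hα₀2 : α₀ < 2)
    (hL : 0 ≤ L) (hLt : L * t < 2 - α₀) (hclpos : 0 < cl)
    (hcont : ContinuousOn α (Set.Icc 0 t))
    (hrange : ∀ s ∈ Set.Icc 0 t, α s ∈ Set.Ioo (1:ℝ) 2)
    (hlip : ∀ s ∈ Set.Icc 0 t, α s ≤ α₀ + L * t)
    (hΓ : ∀ s ∈ Set.Icc 0 t, cl ≤ Real.Gamma (2 - α s)) :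
    IntervalIntegrable (fun u => (t - u) ^ (α₀ - 2) / Real.Gamma (α₀ - 1)
      * (u ^ (1 - α u) / Real.Gamma (2 - α u))) volume 0 t := by
  have hbu : (0:ℝ) < 2 - α₀ - L * t := by linarith
  have Ibeta := beta_intervalIntegrable (a := α₀ - 1) (b := 2 - α₀ - L * t)
    (by linarith) hbu ht
  have IFu := Ibeta.div_const (Real.Gamma (α₀ - 1) * cl)
  refine IFu.mono_fun' ?_ ?_
  · have h1 : AEStronglyMeasurable (fun u => (t - u) ^ (α₀ - 2) / Real.Gamma (α₀ - 1)
        * (u ^ (1 - α u) / Real.Gamma (2 - α u))) (volume.restrict (Set.Ioo 0 t)) :=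
      (f_continuousOn (α₀ := α₀) ht hcont hrange).aestronglyMeasurable measurableSet_Ioo
    rw [Measure.restrict_congr_set Ioo_ae_eq_Ioc] at h1
    rwa [Set.uIoc_of_le ht.le]
  · rw [Set.uIoc_of_le ht.le]
    refine MeasureTheory.ae_restrict_of_forall_mem measurableSet_Ioc fun x hx => ?_
    have hnn := f_nonneg (α₀ := α₀) ht hα₀ hrange x hx
    simp only [Real.norm_of_nonneg hnn]
    exact f_pointwise_le ht ht1 hα₀ hα₀2 hL hclpos hrange hlip hΓ x ⟨hx.1.le, hx.2⟩

lemma g_integral_le (ht : 0 < t) (ht1 : t ≤ 1) (hα₀ : 1 < α₀) (hα₀2 : α₀ < 2)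
    (hL : 0 ≤ L) (hLt : L * t < 2 - α₀) (hclpos : 0 < cl)
    (hcont : ContinuousOn α (Set.Icc 0 t))
    (hrange : ∀ s ∈ Set.Icc 0 t, α s ∈ Set.Ioo (1:ℝ) 2)
    (hlip : ∀ s ∈ Set.Icc 0 t, α s ≤ α₀ + L * t)
    (hΓ : ∀ s ∈ Set.Icc 0 t, cl ≤ Real.Gamma (2 - α s)) :
    (∫ u in (0:ℝ)..t, (t - u) ^ (α₀ - 2) / Real.Gamma (α₀ - 1)
        * (u ^ (1 - α u) / Real.Gamma (2 - α u)))
      ≤ t ^ (-(L * t)) * Real.Gamma (2 - α₀ - L * t) / (Real.Gamma (1 - L * t) * cl) := by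
  have hbu : (0:ℝ) < 2 - α₀ - L * t := by linarith
  have ha : (0:ℝ) < α₀ - 1 := by linarith
  have Ibeta := beta_intervalIntegrable (a := α₀ - 1) (b := 2 - α₀ - L * t) ha hbu ht
  have key := beta_div_eval (a := α₀ - 1) (b := 2 - α₀ - L * t) (c := cl) ha hbu ht hclpos.ne'
  calc (∫ u in (0:ℝ)..t, (t - u) ^ (α₀ - 2) / Real.Gamma (α₀ - 1)
        * (u ^ (1 - α u) / Real.Gamma (2 - α u)))
      ≤ ∫ u in (0:ℝ)..t, (t - u) ^ (α₀ - 1 - 1) * u ^ (2 - α₀ - L * t - 1)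
          / (Real.Gamma (α₀ - 1) * cl) :=
        intervalIntegral.integral_mono_on ht.le
          (f_intervalIntegrable ht ht1 hα₀ hα₀2 hL hLt hclpos hcont hrange hlip hΓ)
          (Ibeta.div_const _)
          (f_pointwise_le ht ht1 hα₀ hα₀2 hL hclpos hrange hlip hΓ)
    _ = t ^ (α₀ - 1 + (2 - α₀ - L * t) - 1) * Real.Gamma (2 - α₀ - L * t)
          / (Real.Gamma (α₀ - 1 + (2 - α₀ - L * t)) * cl) := key
    _ = t ^ (-(L * t)) * Real.Gamma (2 - α₀ - L * t) / (Real.Gamma (1 - L * t) * cl) := by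
        rw [show α₀ - 1 + (2 - α₀ - L * t) - 1 = -(L * t) by ring,
          show α₀ - 1 + (2 - α₀ - L * t) = 1 - L * t by ring]

lemma g_integral_ge (ht : 0 < t) (ht1 : t ≤ 1) (hα₀ : 1 < α₀) (hα₀2 : α₀ < 2)
    (hL : 0 ≤ L) (hLt : L * t < α₀ - 1) (hcupos : 0 < cu)
    (hrange : ∀ s ∈ Set.Icc 0 t, α s ∈ Set.Ioo (1:ℝ) 2)
    (hlip : ∀ s ∈ Set.Icc 0 t, α₀ - L * t ≤ α s)
    (hΓ : ∀ s ∈ Set.Icc 0 t, Real.Gamma (2 - α s) ≤ cu)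
    (hfint : IntervalIntegrable (fun u => (t - u) ^ (α₀ - 2) / Real.Gamma (α₀ - 1)
      * (u ^ (1 - α u) / Real.Gamma (2 - α u))) volume 0 t) :
    t ^ (L * t) * Real.Gamma (2 - α₀ + L * t) / (Real.Gamma (1 + L * t) * cu)
      ≤ ∫ u in (0:ℝ)..t, (t - u) ^ (α₀ - 2) / Real.Gamma (α₀ - 1)
        * (u ^ (1 - α u) / Real.Gamma (2 - α u)) := by
  have hbl : (0:ℝ) < 2 - α₀ + L * t := by nlinarith
  have ha : (0:ℝ) < α₀ - 1 := by linarith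
  have Ibeta := beta_intervalIntegrable (a := α₀ - 1) (b := 2 - α₀ + L * t) ha hbl ht
  have key := beta_div_eval (a := α₀ - 1) (b := 2 - α₀ + L * t) (c := cu) ha hbl ht hcupos.ne'
  calc t ^ (L * t) * Real.Gamma (2 - α₀ + L * t) / (Real.Gamma (1 + L * t) * cu)
      = t ^ (α₀ - 1 + (2 - α₀ + L * t) - 1) * Real.Gamma (2 - α₀ + L * t)
          / (Real.Gamma (α₀ - 1 + (2 - α₀ + L * t)) * cu) := by
        rw [show α₀ - 1 + (2 - α₀ + L * t) - 1 = L * t by ring,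
          show α₀ - 1 + (2 - α₀ + L * t) = 1 + L * t by ring]
    _ = ∫ u in (0:ℝ)..t, (t - u) ^ (α₀ - 1 - 1) * u ^ (2 - α₀ + L * t - 1)
          / (Real.Gamma (α₀ - 1) * cu) := key.symm
    _ ≤ _ :=
        intervalIntegral.integral_mono_on ht.le (Ibeta.div_const _) hfint
          (f_pointwise_ge ht ht1 hα₀ hα₀2 hL hLt hcupos hrange hlip hΓ)

end bounds3

/-- the generalized identity function g tends to 1 as t → 0⁺. -/
theorem g_tendsto_one (T : ℝ) (hT : 0 < T) (α : ℝ → ℝ)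
    (hα : ContDiffOn ℝ 1 α (Set.Icc 0 T))
    (hrange : ∀ s ∈ Set.Icc 0 T, α s ∈ Set.Ioo (1:ℝ) 2)
    (α₀ : ℝ) (hα₀ : α₀ = α 0)
    (g : ℝ → ℝ)
    (hg : ∀ s ∈ Set.Ioc 0 T, g s = ∫ u in (0:ℝ)..s,
      (s - u) ^ (α₀ - 2) / Real.Gamma (α₀ - 1)
        * (u ^ (1 - α u) / Real.Gamma (2 - α u))) :
    Filter.Tendsto g (nhdsWithin 0 (Set.Ioi 0)) (nhds 1) := by
  have hmemT : (0:ℝ) ∈ Set.Icc 0 T := ⟨le_rfl, hT.le⟩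
  have hα₀mem : α₀ ∈ Set.Ioo (1:ℝ) 2 := hα₀ ▸ hrange 0 hmemT
  obtain ⟨hα₀1, hα₀2⟩ := hα₀mem
  have hβ₀pos : (0:ℝ) < 2 - α₀ := by linarith
  have hΓβ₀pos : 0 < Real.Gamma (2 - α₀) := Real.Gamma_pos_of_pos hβ₀pos
  -- Lipschitz bound near 0
  obtain ⟨K, u, hu, hK⟩ := (hα 0 hmemT).exists_lipschitzOnWith (convex_Icc 0 T)
  obtain ⟨r, hr, hru⟩ := Metric.mem_nhdsWithin_iff.mp hu
  set L : ℝ := (K : ℝ) with hLdef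
  have hL0 : (0:ℝ) ≤ L := K.coe_nonneg
  have hlip : ∀ s, 0 ≤ s → s ≤ T → s < r → |α s - α₀| ≤ L * s := by
    intro s h0 hTs hrs
    have hsu : s ∈ u := hru ⟨by simpa [Metric.mem_ball, Real.dist_eq, abs_of_nonneg h0] using hrs,
      ⟨h0, hTs⟩⟩
    have h0u : (0:ℝ) ∈ u := hru ⟨Metric.mem_ball_self hr, hmemT⟩
    have hd := hK.dist_le_mul s hsu 0 h0u
    rw [Real.dist_eq, Real.dist_eq, sub_zero, abs_of_nonneg h0] at hd
    rw [hα₀]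
    exact hd
  rw [Metric.tendsto_nhds]
  intro ε hε
  -- constants
  set cl : ℝ := Real.Gamma (2 - α₀) / (1 + ε / 2) with hcl
  set cu : ℝ := Real.Gamma (2 - α₀) * (1 + ε / 2) with hcu
  have hclpos : 0 < cl := div_pos hΓβ₀pos (by linarith)
  have hcupos : 0 < cu := mul_pos hΓβ₀pos (by linarith)
  have hclΓ : cl < Real.Gamma (2 - α₀) := by
    rw [hcl, div_lt_iff₀ (by linarith)]
    nlinarith
  have hΓcu : Real.Gamma (2 - α₀) < cu := by
    rw [hcu]
    nlinarith
  -- δΓ from continuity of Gamma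
  have hΓev : ∀ᶠ x in nhds (2 - α₀), Real.Gamma x ∈ Set.Ioo cl cu :=
    (gamma_continuousAt hβ₀pos).eventually_mem (Ioo_mem_nhds hclΓ hΓcu)
  obtain ⟨δΓ, hδΓ, hΓball⟩ := Metric.eventually_nhds_iff.mp hΓev
  -- limits of the bounding functions
  have hval1 : Real.Gamma (2 - α₀) / cl = 1 + ε / 2 := by
    rw [hcl]
    field_simp
  have hval2 : 1 - ε < Real.Gamma (2 - α₀) / cu := by
    have h : Real.Gamma (2 - α₀) / cu = 1 / (1 + ε / 2) := by
      rw [hcu]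
      rw [eq_div_iff (by linarith : (1:ℝ) + ε / 2 ≠ 0)]
      field_simp
    rw [h, lt_div_iff₀ (by linarith)]
    nlinarith
  have hPlim : Filter.Tendsto (fun t : ℝ => t ^ (-(L * t)) * Real.Gamma (2 - α₀ - L * t)
      / (Real.Gamma (1 - L * t) * cl)) (nhdsWithin 0 (Set.Ioi 0))
      (nhds (Real.Gamma (2 - α₀) / cl)) := by
    have h := (PQ_tendsto (-L) (2 - α₀) hβ₀pos).div_const cl
    refine h.congr (fun t => ?_)
    rw [neg_mul, div_div, show 2 - α₀ + -(L * t) = 2 - α₀ - L * t by ring,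
      show (1:ℝ) + -(L * t) = 1 - L * t by ring]
  have hQlim : Filter.Tendsto (fun t : ℝ => t ^ (L * t) * Real.Gamma (2 - α₀ + L * t)
      / (Real.Gamma (1 + L * t) * cu)) (nhdsWithin 0 (Set.Ioi 0))
      (nhds (Real.Gamma (2 - α₀) / cu)) := by
    have h := (PQ_tendsto L (2 - α₀) hβ₀pos).div_const cu
    refine h.congr (fun t => ?_)
    rw [div_div]
  have hup : ∀ᶠ t in nhdsWithin 0 (Set.Ioi 0), t ^ (-(L * t)) * Real.Gamma (2 - α₀ - L * t)
      / (Real.Gamma (1 - L * t) * cl) < 1 + ε := by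
    refine hPlim.eventually_mem (Iio_mem_nhds ?_) |>.mono (fun t ht => ht)
    rw [hval1]
    linarith
  have hlo : ∀ᶠ t in nhdsWithin 0 (Set.Ioi 0), 1 - ε < t ^ (L * t)
      * Real.Gamma (2 - α₀ + L * t) / (Real.Gamma (1 + L * t) * cu) := by
    refine hQlim.eventually_mem (Ioi_mem_nhds hval2) |>.mono (fun t ht => ht)
  -- smallness of L * t
  set m : ℝ := min δΓ (min ((2 - α₀) / 2) ((α₀ - 1) / 2)) with hm
  have hmpos : 0 < m := lt_min hδΓ (lt_min (by linarith) (by linarith))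
  have hLt_ev : ∀ᶠ t in nhdsWithin 0 (Set.Ioi 0), L * t < m := by
    have h : Filter.Tendsto (fun t : ℝ => L * t) (nhdsWithin 0 (Set.Ioi 0)) (nhds 0) := by
      have hc : Continuous fun t : ℝ => L * t := continuous_const.mul continuous_id
      have := hc.tendsto (0:ℝ)
      rw [mul_zero] at this
      exact this.mono_left nhdsWithin_le_nhds
    exact h.eventually_mem (Iio_mem_nhds hmpos)
  have hsmall_ev : Set.Ioo (0:ℝ) (min (min T 1) r) ∈ nhdsWithin 0 (Set.Ioi 0) :=
    Ioo_mem_nhdsGT_of_mem ⟨le_rfl, lt_min (lt_min hT one_pos) hr⟩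
  filter_upwards [hup, hlo, hLt_ev, hsmall_ev] with t hupt hlot hLtt htmem
  obtain ⟨ht0, htlt⟩ := htmem
  have htT : t ≤ T := le_of_lt (lt_of_lt_of_le htlt ((min_le_left _ _).trans (min_le_left _ _)))
  have ht1 : t ≤ 1 := le_of_lt (lt_of_lt_of_le htlt ((min_le_left _ _).trans (min_le_right _ _)))
  have htr : t < r := lt_of_lt_of_le htlt (min_le_right _ _)
  have hLtδΓ : L * t < δΓ := lt_of_lt_of_le hLtt (min_le_left _ _)
  have hLtβ : L * t < 2 - α₀ := by
    have := lt_of_lt_of_le hLtt ((min_le_right _ _).trans (min_le_left _ _))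
    linarith
  have hLta : L * t < α₀ - 1 := by
    have := lt_of_lt_of_le hLtt ((min_le_right _ _).trans (min_le_right _ _))
    linarith
  -- hypotheses on Icc 0 t
  have hcont' : ContinuousOn α (Set.Icc 0 t) :=
    hα.continuousOn.mono (Set.Icc_subset_Icc le_rfl htT)
  have hrange' : ∀ s ∈ Set.Icc 0 t, α s ∈ Set.Ioo (1:ℝ) 2 :=
    fun s hs => hrange s ⟨hs.1, hs.2.trans htT⟩
  have hlipt : ∀ s ∈ Set.Icc 0 t, |α s - α₀| ≤ L * t := by
    intro s hs
    refine (hlip s hs.1 (hs.2.trans htT) (lt_of_le_of_lt hs.2 htr)).trans ?_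
    exact mul_le_mul_of_nonneg_left hs.2 hL0
  have hlipU : ∀ s ∈ Set.Icc 0 t, α s ≤ α₀ + L * t := by
    intro s hs
    have := (abs_le.mp (hlipt s hs)).2
    linarith
  have hlipL : ∀ s ∈ Set.Icc 0 t, α₀ - L * t ≤ α s := by
    intro s hs
    have := (abs_le.mp (hlipt s hs)).1
    linarith
  have hΓmem : ∀ s ∈ Set.Icc 0 t, Real.Gamma (2 - α s) ∈ Set.Ioo cl cu := by
    intro s hs
    refine hΓball ?_
    rw [Real.dist_eq, show 2 - α s - (2 - α₀) = -(α s - α₀) by ring, abs_neg]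
    exact lt_of_le_of_lt (hlipt s hs) hLtδΓ
  have hΓl : ∀ s ∈ Set.Icc 0 t, cl ≤ Real.Gamma (2 - α s) := fun s hs => (hΓmem s hs).1.le
  have hΓu : ∀ s ∈ Set.Icc 0 t, Real.Gamma (2 - α s) ≤ cu := fun s hs => (hΓmem s hs).2.le
  -- apply the bounds
  rw [hg t ⟨ht0, htT⟩]
  have hle := g_integral_le ht0 ht1 hα₀1 hα₀2 hL0 hLtβ hclpos hcont' hrange' hlipU hΓl
  have hfi := f_intervalIntegrable ht0 ht1 hα₀1 hα₀2 hL0 hLtβ hclpos hcont' hrange' hlipU hΓl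
  have hge := g_integral_ge ht0 ht1 hα₀1 hα₀2 hL0 hLta hcupos hrange' hlipL hΓu hfi
  rw [Real.dist_eq, abs_lt]
  constructor
  · linarith [lt_of_lt_of_le hlot hge]
  · linarith [lt_of_le_of_lt hle hupt]
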